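/- There is no cubic self 2-distance graph: no finite connected simple graph Γ that is regular of degree 3 satisfies Γ₂ ≅ Γ. -/

import Mathlib

open SimpleGraph

lemma my_dist_two_iff {V : Type*} (G : SimpleGraph V) (u v : V) :
    G.dist u v = 2 ↔ u ≠ v ∧ ¬ G.Adj u v ∧ ∃ x, G.Adj u x ∧ G.Adj x v := by
  constructor
  · intro h
    have hne : u ≠ v := by rintro rfl; simp [SimpleGraph.dist_self] at h
    have hr : G.Reachable u v := by
      by_contra hr
      rw [SimpleGraph.dist_eq_zero_iff_eq_or_not_reachable.mpr (Or.inr hr)] at h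
      omega
    obtain ⟨p, hp⟩ := hr.exists_walk_length_eq_dist
    rw [h] at hp
    have hadj : ¬ G.Adj u v := by
      intro ha
      have := SimpleGraph.dist_eq_one_iff_adj.mpr ha
      omega
    refine ⟨hne, hadj, ?_⟩
    cases p with
    | nil => simp at hp
    | cons h1 q =>
      cases q with
      | nil => simp at hp
      | cons h2 r =>
        cases r with
        | nil => exact ⟨_, h1, h2⟩
        | cons h3 s => simp [SimpleGraph.Walk.length_cons] at hp
  · rintro ⟨hne, hadj, x, h1, h2⟩
    have hle : G.dist u v ≤ 2 := by
      have := SimpleGraph.dist_le (SimpleGraph.Walk.cons h1 (SimpleGraph.Walk.cons h2 SimpleGraph.Walk.nil))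
      simpa using this
    have h0 : G.dist u v ≠ 0 := by
      rw [Ne, SimpleGraph.dist_eq_zero_iff_eq_or_not_reachable]
      push_neg
      exact ⟨hne, ⟨SimpleGraph.Walk.cons h1 (SimpleGraph.Walk.cons h2 SimpleGraph.Walk.nil)⟩⟩
    have h1' : G.dist u v ≠ 1 := fun h => hadj (SimpleGraph.dist_eq_one_iff_adj.mp h)
    omega

/-- The 2-distance graph of a graph `G`: two distinct vertices are adjacent
iff their distance in `G` equals `2`. -/
def twoDistGraph {V : Type*} (G : SimpleGraph V) : SimpleGraph V where
  Adj u v := G.dist u v = 2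
  symm := by
    constructor
    intro u v h
    show G.dist v u = 2
    rwa [SimpleGraph.dist_comm]
  loopless := by
    constructor
    intro v h
    show False
    simp [SimpleGraph.dist_self] at h

/-- `G` has an `n`-cycle subgraph: `n` distinct vertices `v 0, …, v (n-1)` with
`v i` adjacent to `v (i+1 mod n)` for all `i`. -/
def HasNCycle {V : Type*} (G : SimpleGraph V) (n : ℕ) : Prop :=
  ∃ v : ZMod n → V, Function.Injective v ∧ ∀ i, G.Adj (v i) (v (i + 1))

/-- The edged product `C₅|C₃`: a pentagon and a triangle glued along an edge. -/
def C5C3 : SimpleGraph (Fin 6) :=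
  SimpleGraph.fromEdgeSet {s(0,1), s(1,2), s(2,3), s(3,4), s(4,5), s(5,0), s(1,5)}

/-- There is no cubic self 2-distance graph. -/
theorem no_cubic_selfTwoDist {V : Type*} [Fintype V] (G : SimpleGraph V)
    [DecidableRel G.Adj]
    (hconn : G.Connected) (hcubic : ∀ v : V, G.degree v = 3) :
    IsEmpty (twoDistGraph G ≃g G) := by
  constructor
  intro e
  classical
  -- every vertex has exactly 3 vertices at distance 2
  have hS2 : ∀ v : V, ∃ s : Finset V, s.card = 3 ∧ ∀ w, (w ∈ s ↔ G.dist v w = 2) := by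
    intro v
    haveI : Fintype ((twoDistGraph G).neighborSet v) := Fintype.ofFinite _
    refine ⟨((twoDistGraph G).neighborSet v).toFinset, ?_, ?_⟩
    · rw [Set.toFinset_card]
      have h1 : Fintype.card ((twoDistGraph G).neighborSet v)
          = Fintype.card (G.neighborSet (e v)) := Fintype.card_congr (e.mapNeighborSet v)
      rw [h1, SimpleGraph.card_neighborSet_eq_degree]
      exact hcubic (e v)
    · intro w
      rw [Set.mem_toFinset]
      exact Iff.rfl
  have hnf : ∀ v : V, (G.neighborFinset v).card = 3 := fun v => hcubic v
  -- three neighbors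
  have hthree : ∀ v : V, ∃ a b c : V, a ≠ b ∧ a ≠ c ∧ b ≠ c ∧ G.Adj v a ∧ G.Adj v b ∧ G.Adj v c := by
    intro v
    obtain ⟨a, b, c, hab, hac, hbc, hs⟩ := Finset.card_eq_three.mp (hnf v)
    refine ⟨a, b, c, hab, hac, hbc, ?_, ?_, ?_⟩ <;>
      [skip; skip; skip] <;>
      · rw [← SimpleGraph.mem_neighborFinset, hs]; simp
  -- the third neighbor given two
  have hthird : ∀ v x y : V, G.Adj v x → G.Adj v y → x ≠ y →
      ∃ t, G.Adj v t ∧ t ≠ x ∧ t ≠ y ∧ ∀ z, G.Adj v z → z = x ∨ z = y ∨ z = t := by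
    intro v x y hx hy hxy
    have hx' : x ∈ G.neighborFinset v := by simpa using hx
    have hy' : y ∈ (G.neighborFinset v).erase x :=
      Finset.mem_erase.mpr ⟨hxy.symm, by simpa using hy⟩
    have hc : (((G.neighborFinset v).erase x).erase y).card = 1 := by
      rw [Finset.card_erase_of_mem hy', Finset.card_erase_of_mem hx', hnf v]
    obtain ⟨t, ht⟩ := Finset.card_eq_one.mp hc
    have htm : t ∈ ((G.neighborFinset v).erase x).erase y := by rw [ht]; exact Finset.mem_singleton_self t
    obtain ⟨hty, htm2⟩ := Finset.mem_erase.mp htm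
    obtain ⟨htx, htm3⟩ := Finset.mem_erase.mp htm2
    refine ⟨t, by simpa using htm3, htx, hty, ?_⟩
    intro z hz
    by_cases h1 : z = x
    · exact Or.inl h1
    by_cases h2 : z = y
    · exact Or.inr (Or.inl h2)
    right; right
    have : z ∈ ((G.neighborFinset v).erase x).erase y :=
      Finset.mem_erase.mpr ⟨h2, Finset.mem_erase.mpr ⟨h1, by simpa using hz⟩⟩
    rw [ht] at this
    exact Finset.mem_singleton.mp this
  -- the other two neighbors given one
  have hpair : ∀ v x : V, G.Adj v x →
      ∃ p q : V, p ≠ q ∧ p ≠ x ∧ q ≠ x ∧ G.Adj v p ∧ G.Adj v q ∧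
        ∀ z, G.Adj v z → z = x ∨ z = p ∨ z = q := by
    intro v x hvx
    have hx' : x ∈ G.neighborFinset v := by simpa using hvx
    have hc : ((G.neighborFinset v).erase x).card = 2 := by
      rw [Finset.card_erase_of_mem hx', hnf v]
    obtain ⟨p, q, hpq, hs⟩ := Finset.card_eq_two.mp hc
    have hp : p ∈ (G.neighborFinset v).erase x := by rw [hs]; simp
    have hq : q ∈ (G.neighborFinset v).erase x := by rw [hs]; simp
    obtain ⟨hpx, hp2⟩ := Finset.mem_erase.mp hp
    obtain ⟨hqx, hq2⟩ := Finset.mem_erase.mp hq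
    refine ⟨p, q, hpq, hpx, hqx, by simpa using hp2, by simpa using hq2, ?_⟩
    intro z hz
    by_cases h1 : z = x
    · exact Or.inl h1
    have : z ∈ (G.neighborFinset v).erase x :=
      Finset.mem_erase.mpr ⟨h1, by simpa using hz⟩
    rw [hs] at this
    rcases Finset.mem_insert.mp this with h | h
    · exact Or.inr (Or.inl h)
    · exact Or.inr (Or.inr (Finset.mem_singleton.mp h))
  by_cases htri : ∃ x y z : V, G.Adj x y ∧ G.Adj x z ∧ G.Adj y z
  case neg =>
    -- triangle-free case: neighbors of a vertex give a triangle in Γ₂, hence in G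
    push_neg at htri
    obtain ⟨v⟩ := hconn.nonempty
    obtain ⟨a, b, c, hab, hac, hbc, ha, hb, hc⟩ := hthree v
    have d2 : ∀ x y : V, x ≠ y → G.Adj v x → G.Adj v y → G.dist x y = 2 := by
      intro x y hxy hx hy
      rw [my_dist_two_iff]
      exact ⟨hxy, htri v x y hx hy, v, hx.symm, hy⟩
    have t1 : (twoDistGraph G).Adj a b := d2 a b hab ha hb
    have t2 : (twoDistGraph G).Adj a c := d2 a c hac ha hc
    have t3 : (twoDistGraph G).Adj b c := d2 b c hbc hb hc
    exact htri (e a) (e b) (e c) (e.map_adj_iff.mpr t1) (e.map_adj_iff.mpr t2) (e.map_adj_iff.mpr t3)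
  case pos =>
    obtain ⟨u, v, w, huv, huw, hvw⟩ := htri
    -- step2: external neighbor of u is not adjacent to v
    have step2 : ∀ u v w a b c : V, G.Adj u v → G.Adj u w → G.Adj v w →
        G.Adj u a → a ≠ v → a ≠ w →
        (∀ z, G.Adj u z → z = v ∨ z = w ∨ z = a) →
        (∀ z, G.Adj v z → z = u ∨ z = w ∨ z = b) →
        (∀ z, G.Adj w z → z = u ∨ z = v ∨ z = c) →
        ¬ G.Adj v a := by
      intro u v w a b c huv huw hvw hua hav haw hcu hcv hcw hva
      have hab : a = b := by
        rcases hcv a hva with h | h | h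
        · exact absurd h hua.ne'
        · exact absurd h haw
        · exact h
      obtain ⟨t, hat, htu, htv, hct⟩ := hthird a u v hua.symm hva.symm huv.ne
      obtain ⟨s2, hs2card, hs2mem⟩ := hS2 u
      have hsub : s2 ⊆ ({c, t} : Finset V) := by
        intro y hy
        obtain ⟨hyu, hyadj, x, hux, hxy⟩ := (my_dist_two_iff G u y).mp ((hs2mem y).mp hy)
        rcases hcu x hux with h | h | h
        · subst h
          rcases hcv y hxy with h' | h' | h'
          · exact absurd h'.symm hyu
          · exact absurd huw (h' ▸ hyadj)
          · exact absurd hua ((h'.trans hab.symm) ▸ hyadj)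
        · subst h
          rcases hcw y hxy with h' | h' | h'
          · exact absurd h'.symm hyu
          · exact absurd huv (h' ▸ hyadj)
          · simp [h']
        · subst h
          rcases hct y hxy with h' | h' | h'
          · exact absurd h'.symm hyu
          · exact absurd huv (h' ▸ hyadj)
          · simp [h']
      have hle := Finset.card_le_card hsub
      have h2 : ({c, t} : Finset V).card ≤ 2 :=
        le_trans (Finset.card_insert_le c {t}) (by simp)
      omega
    have key : ∀ u v w a b c : V, G.Adj u v → G.Adj u w → G.Adj v w →
        G.Adj u a → a ≠ v → a ≠ w → G.Adj v b → b ≠ u → b ≠ w → G.Adj w c → c ≠ u → c ≠ v →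
        (∀ z, G.Adj u z → z = v ∨ z = w ∨ z = a) →
        (∀ z, G.Adj v z → z = u ∨ z = w ∨ z = b) →
        (∀ z, G.Adj w z → z = u ∨ z = v ∨ z = c) →
        (G.Adj a b ∨ G.Adj a c) ∧ ¬ (G.Adj a b ∧ G.Adj a c) := by
      intro u v w a b c huv huw hvw hua hav haw hvb hbu hbw hwc hcu hcv hcharu hcharv hcharw
      have hva : ¬ G.Adj v a :=
        step2 u v w a b c huv huw hvw hua hav haw hcharu hcharv hcharw
      have hwa : ¬ G.Adj w a :=
        step2 u w v a c b huw huv hvw.symm hua haw hav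
          (fun z hz => by rcases hcharu z hz with h | h | h <;> tauto)
          hcharw hcharv
      have hub : ¬ G.Adj u b :=
        step2 v u w b a c huv.symm hvw huw hvb hbu hbw hcharv hcharu
          (fun z hz => by rcases hcharw z hz with h | h | h <;> tauto)
      have hwb : ¬ G.Adj w b :=
        step2 v w u b c a hvw huv.symm huw.symm hvb hbw hbu
          (fun z hz => by rcases hcharv z hz with h | h | h <;> tauto)
          (fun z hz => by rcases hcharw z hz with h | h | h <;> tauto)
          (fun z hz => by rcases hcharu z hz with h | h | h <;> tauto)
      have huc : ¬ G.Adj u c :=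
        step2 w u v c a b huw.symm hvw.symm huv hwc hcu hcv hcharw
          (fun z hz => by rcases hcharu z hz with h | h | h <;> tauto)
          (fun z hz => by rcases hcharv z hz with h | h | h <;> tauto)
      have hvc : ¬ G.Adj v c :=
        step2 w v u c b a hvw.symm huw.symm huv.symm hwc hcv hcu
          (fun z hz => by rcases hcharw z hz with h | h | h <;> tauto)
          (fun z hz => by rcases hcharv z hz with h | h | h <;> tauto)
          (fun z hz => by rcases hcharu z hz with h | h | h <;> tauto)
      have hbc : b ≠ c := fun h => hwb (by rw [h]; exact hwc)
      obtain ⟨s2, hs2card, hs2mem⟩ := hS2 u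
      have hmb : b ∈ s2 := (hs2mem b).mpr
        ((my_dist_two_iff G u b).mpr ⟨fun h => hbu h.symm, hub, v, huv, hvb⟩)
      have hmc : c ∈ s2 := (hs2mem c).mpr
        ((my_dist_two_iff G u c).mpr ⟨fun h => hcu h.symm, huc, w, huw, hwc⟩)
      obtain ⟨p, q, hpq, hpu, hqu, hap, haq, hchara⟩ := hpair a u hua.symm
      have hup : ¬ G.Adj u p := by
        intro h
        rcases hcharu p h with h' | h' | h'
        · exact hva (h' ▸ hap).symm
        · exact hwa (h' ▸ hap).symm
        · exact G.loopless.irrefl a (h' ▸ hap)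
      have huq : ¬ G.Adj u q := by
        intro h
        rcases hcharu q h with h' | h' | h'
        · exact hva (h' ▸ haq).symm
        · exact hwa (h' ▸ haq).symm
        · exact G.loopless.irrefl a (h' ▸ haq)
      have hmp : p ∈ s2 := (hs2mem p).mpr
        ((my_dist_two_iff G u p).mpr ⟨fun h => hpu h.symm, hup, a, hua, hap⟩)
      have hmq : q ∈ s2 := (hs2mem q).mpr
        ((my_dist_two_iff G u q).mpr ⟨fun h => hqu h.symm, huq, a, hua, haq⟩)
      constructor
      · by_contra hno
        push_neg at hno
        have hpb : p ≠ b := fun h => hno.1 (h ▸ hap)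
        have hpc : p ≠ c := fun h => hno.2 (h ▸ hap)
        have hqb : q ≠ b := fun h => hno.1 (h ▸ haq)
        have hqc : q ≠ c := fun h => hno.2 (h ▸ haq)
        have hsub : ({b, c, p, q} : Finset V) ⊆ s2 := by
          intro z hz
          simp only [Finset.mem_insert, Finset.mem_singleton] at hz
          rcases hz with rfl | rfl | rfl | rfl
          · exact hmb
          · exact hmc
          · exact hmp
          · exact hmq
        have hcard4 : ({b, c, p, q} : Finset V).card = 4 := by
          rw [Finset.card_insert_of_notMem (by simp [hbc, hpb.symm, hqb.symm]),
            Finset.card_insert_of_notMem (by simp [hpc.symm, hqc.symm]),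
            Finset.card_insert_of_notMem (by simp [hpq]), Finset.card_singleton]
        have := Finset.card_le_card hsub
        omega
      · rintro ⟨hb, hc⟩
        have hbpq : b = p ∨ b = q := by
          rcases hchara b hb with h | h | h
          · exact absurd h hbu
          · exact Or.inl h
          · exact Or.inr h
        have hcpq : c = p ∨ c = q := by
          rcases hchara c hc with h | h | h
          · exact absurd h hcu
          · exact Or.inl h
          · exact Or.inr h
        have hsub : s2 ⊆ ({b, c} : Finset V) := by
          intro y hy
          obtain ⟨hyu, hyadj, x, hux, hxy⟩ := (my_dist_two_iff G u y).mp ((hs2mem y).mp hy)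
          rcases hcharu x hux with h | h | h
          · subst h
            rcases hcharv y hxy with h' | h' | h'
            · exact absurd h'.symm hyu
            · exact absurd huw (h' ▸ hyadj)
            · simp [h']
          · subst h
            rcases hcharw y hxy with h' | h' | h'
            · exact absurd h'.symm hyu
            · exact absurd huv (h' ▸ hyadj)
            · simp [h']
          · subst h
            rcases hchara y hxy with h' | h' | h'
            · exact absurd h'.symm hyu
            · -- y = p
              rcases hbpq with hbp | hbq
              · simp [h', ← hbp]
              · rcases hcpq with hcp | hcq
                · simp [h', ← hcp]
                · exact absurd (hbq.trans hcq.symm) hbc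
            · -- y = q
              rcases hbpq with hbp | hbq
              · rcases hcpq with hcp | hcq
                · exact absurd (hbp.trans hcp.symm) hbc
                · simp [h', ← hcq]
              · simp [h', ← hbq]
        have hle := Finset.card_le_card hsub
        have h2 : ({b, c} : Finset V).card ≤ 2 :=
          le_trans (Finset.card_insert_le b {c}) (by simp)
        omega
    -- thirds for the triangle
    obtain ⟨a, hua, hav, haw, hcharu⟩ := hthird u v w huv huw hvw.ne
    obtain ⟨b, hvb, hbu, hbw, hcharv⟩ := hthird v u w huv.symm hvw huw.ne
    obtain ⟨c, hwc, hcu, hcv, hcharw⟩ := hthird w u v huw.symm hvw.symm huv.ne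
    have K1 := key u v w a b c huv huw hvw hua hav haw hvb hbu hbw hwc hcu hcv hcharu hcharv hcharw
    have K2 := key v u w b a c huv.symm hvw huw hvb hbu hbw hua hav haw hwc hcv hcu
      hcharv hcharu (fun z hz => by rcases hcharw z hz with h | h | h <;> tauto)
    have K3 := key w u v c a b huw.symm hvw.symm huv hwc hcu hcv hua haw hav hvb hbw hbu
      hcharw (fun z hz => by rcases hcharu z hz with h | h | h <;> tauto)
      (fun z hz => by rcases hcharv z hz with h | h | h <;> tauto)
    rcases K1.1 with h1 | h1
    · have hnbc : ¬ G.Adj b c := fun h => K2.2 ⟨h1.symm, h⟩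
      rcases K3.1 with h2 | h2
      · exact K1.2 ⟨h1, h2.symm⟩
      · exact hnbc h2.symm
    · have hncb : ¬ G.Adj c b := fun h => K3.2 ⟨h1.symm, h⟩
      rcases K2.1 with h2 | h2
      · exact K1.2 ⟨h2.symm, h1⟩
      · exact hncb h2.symm
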